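/- Let H be a real inner product space, let f : H → H, and suppose μ > 0 and λ > 0 are such that ⟨ŵ − w⋆, f(ŵ)⟩ ≥ μ·‖ŵ − w⋆‖² for a given point ŵ ∈ H. Then the update w_{t+1} = w_t − λ·f(ŵ) satisfies ‖w_{t+1} − w⋆‖² ≤ (1 − λμ)·‖w_t − w⋆‖² + λ²·‖f(ŵ)‖² + 2λμ·‖ŵ − w_t‖² + 2λ·⟨ŵ − w_t, f(ŵ)⟩. -/
import Mathlib


open scoped RealInnerProductSpace

/-- One-step recursion of the perturbed iterate analysis of asynchronous SGD. -/
theorem perturbed_iterate_recursion {H : Type*} [NormedAddCommGroup H]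
    [InnerProductSpace ℝ H] (f : H → H) (μ lam : ℝ) (hμ : 0 < μ) (hlam : 0 < lam)
    (wt wstar what : H)
    (hconv : μ * ‖what - wstar‖ ^ 2 ≤ ⟪what - wstar, f what⟫)
    (wnext : H) (hupd : wnext = wt - lam • f what) :
    ‖wnext - wstar‖ ^ 2 ≤ (1 - lam * μ) * ‖wt - wstar‖ ^ 2
      + lam ^ 2 * ‖f what‖ ^ 2 + 2 * lam * μ * ‖what - wt‖ ^ 2
      + 2 * lam * ⟪what - wt, f what⟫ := by
  have hexp : ‖wnext - wstar‖ ^ 2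
      = ‖wt - wstar‖ ^ 2 - 2 * lam * ⟪wt - wstar, f what⟫ + lam ^ 2 * ‖f what‖ ^ 2 := by
    have h1 : wnext - wstar = (wt - wstar) - lam • f what := by
      rw [hupd]; abel
    rw [h1, norm_sub_sq_real, real_inner_smul_right, norm_smul]
    simp [abs_of_pos hlam]
    ring
  have hsplit : ⟪wt - wstar, f what⟫ = ⟪what - wstar, f what⟫ - ⟪what - wt, f what⟫ := by
    rw [← inner_sub_left]
    congr 1
    abel
  have htri : ‖wt - wstar‖ ^ 2 ≤ 2 * ‖what - wt‖ ^ 2 + 2 * ‖what - wstar‖ ^ 2 := by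
    have h2 : ‖wt - wstar‖ ≤ ‖what - wt‖ + ‖what - wstar‖ := by
      have := norm_sub_le_norm_sub_add_norm_sub wt what wstar
      simpa [norm_sub_rev what wt] using this
    nlinarith [sq_nonneg (‖what - wt‖ - ‖what - wstar‖), norm_nonneg (wt - wstar), norm_nonneg (what - wt), norm_nonneg (what - wstar)]
  nlinarith [hconv, mul_pos hlam hμ]
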